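/- arXiv:1905.06069 — 2 statements merged into one kernel-verified Lean document; each statement's English description precedes it below -/
import Mathlib

section
/- Let D = {(s₊,s₋) ∈ ℂ² : Re s₊ > 0 and Re s₋ > 0} and let f : D → ℂ be holomorphic in each variable separately and satisfy |f(s₊,s₋)| ≤ C / (|s₊|² |s₋|²) on D for some constant C > 0. Define g(s₊,s₋) = i ∫₀^∞ f(s₊ + iσ, s₋ − iσ) dσ. Then this integral converges absolutely for every (s₊,s₋) ∈ D, g is holomorphic in each variable separately on D, and ( ∂g/∂s₊ − ∂g/∂s₋ )(s₊,s₋) = − f(s₊,s₋) for all (s₊,s₋) ∈ D. -/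
open MeasureTheory Filter Set Metric Complex Topology

/-- `g(s₊,s₋) = i ∫₀^∞ f(s₊ + iσ, s₋ - iσ) dσ`. -/
noncomputable def gOff (f : ℂ → ℂ → ℂ) (sp sm : ℂ) : ℂ :=
  Complex.I * ∫ σ in Set.Ioi (0:ℝ),
    f (sp + (σ : ℂ) * Complex.I) (sm - (σ : ℂ) * Complex.I)

namespace Stmt5Aux

def HB (f : ℂ → ℂ → ℂ) (C : ℝ) : Prop :=
  (∀ sp sm : ℂ, 0 < sp.re → 0 < sm.re → DifferentiableAt ℂ (fun z => f z sm) sp) ∧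
  (∀ sp sm : ℂ, 0 < sp.re → 0 < sm.re → DifferentiableAt ℂ (fun z => f sp z) sm) ∧
  (∀ sp sm : ℂ, 0 < sp.re → 0 < sm.re → ‖f sp sm‖ ≤ C / (‖sp‖ ^ 2 * ‖sm‖ ^ 2))

noncomputable def d1 (f : ℂ → ℂ → ℂ) (z w : ℂ) : ℂ := deriv (fun ζ => f ζ w) z
noncomputable def d2 (f : ℂ → ℂ → ℂ) (z w : ℂ) : ℂ := deriv (fun η => f z η) w

lemma re_le_norm' (z : ℂ) : z.re ≤ ‖z‖ := by
  simpa using Complex.re_le_norm z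

lemma norm_mul_I (σ : ℝ) : ‖(σ:ℂ) * Complex.I‖ = |σ| := by
  simp

lemma norm_add_mul_I_ge (z : ℂ) (σ : ℝ) : σ - ‖z‖ ≤ ‖z + σ * Complex.I‖ := by
  have h : ‖(z + (σ:ℂ) * Complex.I) - z‖ ≤ ‖z + (σ:ℂ) * Complex.I‖ + ‖z‖ := norm_sub_le _ _
  have h2 : (z + (σ:ℂ) * Complex.I) - z = (σ:ℂ) * Complex.I := by ring
  rw [h2, norm_mul_I] at h
  have := le_abs_self σ
  linarith

lemma norm_sub_mul_I_ge (z : ℂ) (σ : ℝ) : σ - ‖z‖ ≤ ‖z - σ * Complex.I‖ := by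
  have h : ‖(z - (σ:ℂ) * Complex.I) - z‖ ≤ ‖z - (σ:ℂ) * Complex.I‖ + ‖z‖ := norm_sub_le _ _
  have h2 : (z - (σ:ℂ) * Complex.I) - z = -((σ:ℂ) * Complex.I) := by ring
  rw [h2, norm_neg, norm_mul_I] at h
  have := le_abs_self σ
  linarith

lemma re_add_mul_I (z : ℂ) (σ : ℝ) : (z + (σ:ℂ) * Complex.I).re = z.re := by simp

lemma re_sub_mul_I (z : ℂ) (σ : ℝ) : (z - (σ:ℂ) * Complex.I).re = z.re := by simp

lemma sq_aux {a K : ℝ} (ha : 0 < a) (hK : 0 ≤ K) :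
    ∃ m : ℝ, 0 < m ∧ ∀ σ X : ℝ, 0 ≤ σ → a ≤ X → σ - K ≤ X →
      m * (1 + (σ - K)^2) ≤ X^2 := by
  refine ⟨min (a^2/(1+K^2)) (min (a^2) 1 / 2), by positivity, fun σ X hσ hax hkx => ?_⟩
  have h3 : (0:ℝ) < 1 + K^2 := by positivity
  have ha2 : a^2 ≤ X^2 := by nlinarith
  rcases le_or_gt σ K with h | h
  · have h1 : (σ - K)^2 ≤ K^2 := by nlinarith
    have h2 : min (a^2/(1+K^2)) (min (a^2) 1 / 2) ≤ a^2/(1+K^2) := min_le_left _ _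
    have h4 : a^2/(1+K^2) * (1 + (σ-K)^2) ≤ a^2 := by
      rw [div_mul_eq_mul_div, div_le_iff₀ h3]
      nlinarith
    nlinarith [sq_nonneg (σ - K), div_pos (mul_pos ha ha) h3]
  · have h0 : (0:ℝ) ≤ σ - K := by linarith
    have hx2 : (σ-K)^2 ≤ X^2 := by nlinarith
    have hm : min (a^2/(1+K^2)) (min (a^2) 1 / 2) ≤ min (a^2) 1 / 2 := min_le_right _ _
    have hmin1 : min (a^2) 1 ≤ a^2 := min_le_left _ _
    have hmin2 : min (a^2) 1 ≤ 1 := min_le_right _ _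
    have hminpos : (0:ℝ) < min (a^2) 1 := lt_min (by positivity) one_pos
    nlinarith [sq_nonneg (σ - K), div_pos (mul_pos ha ha) h3]

lemma intBound (c K : ℝ) :
    IntegrableOn (fun σ : ℝ => c * (1 + (σ - K)^2)⁻¹) (Ioi 0) :=
  ((integrable_inv_one_add_sq.comp_sub_right K).const_mul c).integrableOn

lemma cauchy_est {g : ℂ → ℂ} {c : ℂ} {r M : ℝ} (hr : 0 < r)
    (hd : ∀ ζ ∈ Metric.closedBall c r, DifferentiableAt ℂ g ζ)
    (hM : ∀ ζ ∈ Metric.sphere c r, ‖g ζ‖ ≤ M) : ‖deriv g c‖ ≤ M / r := by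
  refine Complex.norm_deriv_le_of_forall_mem_sphere_norm_le hr ?_ hM
  refine DifferentiableOn.diffContOnCl ?_
  rw [closure_ball c hr.ne']
  exact fun ζ hζ => (hd ζ hζ).differentiableWithinAt

lemma re_ball {z ζ : ℂ} {r : ℝ} (h : ζ ∈ Metric.closedBall z r) : z.re - r ≤ ζ.re := by
  have h1 : |(ζ - z).re| ≤ ‖ζ - z‖ := by
    simpa using Complex.abs_re_le_norm (ζ - z)
  have h2 : ‖ζ - z‖ ≤ r := by simpa [Metric.mem_closedBall, dist_eq_norm] using h
  have := abs_le.1 h1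
  simp only [Complex.sub_re] at this
  linarith [this.1]

lemma norm_ball {z ζ : ℂ} {r : ℝ} (h : ζ ∈ Metric.closedBall z r) : ‖z‖ - r ≤ ‖ζ‖ := by
  have h2 : ‖ζ - z‖ ≤ r := by simpa [Metric.mem_closedBall, dist_eq_norm] using h
  have := norm_sub_norm_le z ζ
  have h3 : ‖z - ζ‖ = ‖ζ - z‖ := by rw [← norm_neg]; ring_nf
  linarith

/-- Cauchy-type bound for the first partial derivative. -/

lemma D1bd {f : ℂ → ℂ → ℂ} {C : ℝ} (h : HB f C) (hC : 0 < C) :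
    ∀ z w : ℂ, 0 < z.re → 0 < w.re →
      ‖d1 f z w‖ ≤ 8 * C / (z.re * ‖z‖^2 * ‖w‖^2) := by
  intro z w hz hw
  have hzn : 0 < ‖z‖ := lt_of_lt_of_le hz (re_le_norm' z)
  have hwn : 0 < ‖w‖ := lt_of_lt_of_le hw (re_le_norm' w)
  have key : ‖deriv (fun ζ => f ζ w) z‖ ≤ (4 * C / (‖z‖^2 * ‖w‖^2)) / (z.re / 2) := by
    refine cauchy_est (by positivity) ?_ ?_
    · intro ζ hζ
      have := re_ball hζ
      exact h.1 ζ w (by linarith) hw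
    · intro ζ hζ
      have hζb : ζ ∈ Metric.closedBall z (z.re/2) := sphere_subset_closedBall hζ
      have h1 : z.re/2 ≤ ζ.re := by have := re_ball hζb; linarith
      have h2 : ‖z‖/2 ≤ ‖ζ‖ := by
        have := norm_ball hζb
        have := re_le_norm' z
        linarith
      have h3 := h.2.2 ζ w (by linarith) hw
      calc ‖f ζ w‖ ≤ C / (‖ζ‖^2 * ‖w‖^2) := h3
        _ ≤ C / ((‖z‖/2)^2 * ‖w‖^2) := by gcongr
        _ = 4 * C / (‖z‖^2 * ‖w‖^2) := by field_simp; ring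
  calc ‖d1 f z w‖ = ‖deriv (fun ζ => f ζ w) z‖ := rfl
    _ ≤ (4 * C / (‖z‖^2 * ‖w‖^2)) / (z.re / 2) := key
    _ = 8 * C / (z.re * ‖z‖^2 * ‖w‖^2) := by field_simp; ring

/-- Cauchy-type bound for the second partial derivative. -/

lemma D2bd {f : ℂ → ℂ → ℂ} {C : ℝ} (h : HB f C) (hC : 0 < C) :
    ∀ z w : ℂ, 0 < z.re → 0 < w.re →
      ‖d2 f z w‖ ≤ 8 * C / (‖z‖^2 * w.re * ‖w‖^2) := by
  intro z w hz hw
  have hzn : 0 < ‖z‖ := lt_of_lt_of_le hz (re_le_norm' z)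
  have hwn : 0 < ‖w‖ := lt_of_lt_of_le hw (re_le_norm' w)
  have key : ‖deriv (fun η => f z η) w‖ ≤ (4 * C / (‖z‖^2 * ‖w‖^2)) / (w.re / 2) := by
    refine cauchy_est (by positivity) ?_ ?_
    · intro η hη
      have := re_ball hη
      exact h.2.1 z η hz (by linarith)
    · intro η hη
      have hηb : η ∈ Metric.closedBall w (w.re/2) := sphere_subset_closedBall hη
      have h1 : w.re/2 ≤ η.re := by have := re_ball hηb; linarith
      have h2 : ‖w‖/2 ≤ ‖η‖ := by
        have := norm_ball hηb
        have := re_le_norm' w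
        linarith
      have h3 := h.2.2 z η hz (by linarith)
      calc ‖f z η‖ ≤ C / (‖z‖^2 * ‖η‖^2) := h3
        _ ≤ C / (‖z‖^2 * (‖w‖/2)^2) := by gcongr
        _ = 4 * C / (‖z‖^2 * ‖w‖^2) := by field_simp; ring
  calc ‖d2 f z w‖ = ‖deriv (fun η => f z η) w‖ := rfl
    _ ≤ (4 * C / (‖z‖^2 * ‖w‖^2)) / (w.re / 2) := key
    _ = 8 * C / (‖z‖^2 * w.re * ‖w‖^2) := by field_simp; ring

/-- d1 f (·, w) is differentiable on the half plane. -/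

lemma d1_diff {f : ℂ → ℂ → ℂ} {C : ℝ} (h : HB f C) {w : ℂ} (hw : 0 < w.re) :
    ∀ z : ℂ, 0 < z.re → DifferentiableAt ℂ (fun ζ => d1 f ζ w) z := by
  intro z hz
  have hopen : IsOpen {ζ : ℂ | 0 < ζ.re} := by
    have : {ζ : ℂ | 0 < ζ.re} = Complex.re ⁻¹' (Set.Ioi 0) := rfl
    rw [this]
    exact isOpen_Ioi.preimage Complex.continuous_re
  have hdiff : DifferentiableOn ℂ (fun ζ => f ζ w) {ζ : ℂ | 0 < ζ.re} :=
    fun ζ hζ => (h.1 ζ w hζ hw).differentiableWithinAt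
  have han : AnalyticOnNhd ℂ (fun ζ => f ζ w) {ζ : ℂ | 0 < ζ.re} :=
    hdiff.analyticOnNhd hopen
  have := han.deriv z hz
  exact this.differentiableAt

lemma DD1 {f : ℂ → ℂ → ℂ} {C : ℝ} (h : HB f C) (hC : 0 < C) (sp sm : ℂ)
    (hsp : 0 < sp.re) (hsm : 0 < sm.re) :
    ∃ M : ℝ, 0 < M ∧ ∀ ζ w' : ℂ, ζ ∈ Metric.closedBall sp (sp.re/4) → 0 < w'.re →
      sm.re/2 ≤ w'.re → ‖deriv (fun ξ => d1 f ξ w') ζ‖ ≤ M := by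
  refine ⟨(8*C/((sp.re/2)*(sp.re/2)^2*(sm.re/2)^2)) / (sp.re/4), by positivity, ?_⟩
  intro ζ w' hζ hw1 hw2
  have hball : ∀ ξ ∈ Metric.closedBall ζ (sp.re/4), ξ ∈ Metric.closedBall sp (sp.re/2) := by
    intro ξ hξ
    have h1 : dist ξ ζ ≤ sp.re/4 := hξ
    have h2 : dist ζ sp ≤ sp.re/4 := hζ
    have := dist_triangle ξ ζ sp
    simp only [Metric.mem_closedBall]
    linarith
  have hre : ∀ ξ ∈ Metric.closedBall sp (sp.re/2), sp.re/2 ≤ ξ.re := by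
    intro ξ hξ; have := re_ball hξ; linarith
  refine cauchy_est (by positivity) ?_ ?_
  · intro ξ hξ
    exact d1_diff h hw1 ξ (by have := hre ξ (hball ξ hξ); linarith)
  · intro ξ hξ
    have hmem := hball ξ (sphere_subset_closedBall hξ)
    have h1 : sp.re/2 ≤ ξ.re := hre ξ hmem
    have h2 : sp.re/2 ≤ ‖ξ‖ := le_trans h1 (re_le_norm' ξ)
    have h3 : sm.re/2 ≤ ‖w'‖ := le_trans hw2 (re_le_norm' w')
    calc ‖d1 f ξ w'‖ ≤ 8 * C / (ξ.re * ‖ξ‖^2 * ‖w'‖^2) :=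
          D1bd h hC ξ w' (by linarith) hw1
      _ ≤ 8*C/((sp.re/2)*(sp.re/2)^2*(sm.re/2)^2) := by
          gcongr
          · nlinarith [sq_nonneg ‖ξ‖]
          · linarith

lemma tay1 {f : ℂ → ℂ → ℂ} {C : ℝ} (h : HB f C) (hC : 0 < C) (sp sm : ℂ)
    (hsp : 0 < sp.re) (hsm : 0 < sm.re) :
    ∃ M : ℝ, 0 < M ∧ ∀ (hh : ℂ) (w' : ℂ), ‖hh‖ ≤ sp.re/4 → 0 < w'.re → sm.re/2 ≤ w'.re →
      ‖d1 f (sp+hh) w' - d1 f sp w'‖ ≤ M * ‖hh‖ ∧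
      ‖f (sp+hh) w' - f sp w' - hh * d1 f sp w'‖ ≤ M * ‖hh‖^2 := by
  obtain ⟨M, hM, hDD⟩ := DD1 h hC sp sm hsp hsm
  refine ⟨M, hM, ?_⟩
  intro hh w' hhh hw1 hw2
  have hre : ∀ ζ ∈ Metric.closedBall sp (sp.re/4), 0 < ζ.re := by
    intro ζ hζ; have := re_ball hζ; linarith
  have hmemhh : sp + hh ∈ Metric.closedBall sp (sp.re/4) := by
    simp only [Metric.mem_closedBall, dist_eq_norm, add_sub_cancel_left]
    exact hhh
  -- Lipschitz bound for d1 f (·, w') on the ball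
  have lip : ∀ ξ ∈ Metric.closedBall sp (sp.re/4), ‖d1 f ξ w' - d1 f sp w'‖ ≤ M * ‖ξ - sp‖ := by
    intro ξ hξ
    have hsub : segment ℝ sp ξ ⊆ Metric.closedBall sp (sp.re/4) :=
      (convex_closedBall sp (sp.re/4)).segment_subset (Metric.mem_closedBall_self (by positivity)) hξ
    exact Convex.norm_image_sub_le_of_norm_deriv_le
      (fun ζ hζ => d1_diff h hw1 ζ (hre _ (hsub hζ)))
      (fun ζ hζ => hDD ζ w' (hsub hζ) hw1 hw2)
      (convex_segment _ _) (left_mem_segment ℝ sp ξ) (right_mem_segment ℝ sp ξ)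
  constructor
  · simpa using lip (sp + hh) hmemhh
  · set G := fun ζ : ℂ => f ζ w' - ζ * d1 f sp w' with hG
    have hsub : segment ℝ sp (sp + hh) ⊆ Metric.closedBall sp (sp.re/4) :=
      (convex_closedBall sp (sp.re/4)).segment_subset
        (Metric.mem_closedBall_self (by positivity)) hmemhh
    have hseg_norm : ∀ ξ ∈ segment ℝ sp (sp + hh), ‖ξ - sp‖ ≤ ‖hh‖ := by
      intro ξ hξ
      rw [segment_eq_image'] at hξ
      obtain ⟨t, ht, rfl⟩ := hξ
      simp only [add_sub_cancel_left]
      rw [norm_smul]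
      have : |t| ≤ 1 := by rw [_root_.abs_of_nonneg ht.1]; exact ht.2
      calc ‖t‖ * ‖hh‖ ≤ 1 * ‖hh‖ := by
            apply mul_le_mul_of_nonneg_right _ (norm_nonneg _)
            simpa [Real.norm_eq_abs] using this
        _ = ‖hh‖ := one_mul _
    have hGd : ∀ ζ ∈ segment ℝ sp (sp + hh),
        DifferentiableAt ℂ G ζ ∧ deriv G ζ = d1 f ζ w' - d1 f sp w' := by
      intro ζ hζ
      have hζre : 0 < ζ.re := hre _ (hsub hζ)
      have h1 : HasDerivAt (fun ξ => f ξ w') (d1 f ζ w') ζ := (h.1 ζ w' hζre hw1).hasDerivAt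
      have h2 : HasDerivAt (fun ξ : ℂ => ξ * d1 f sp w') (d1 f sp w') ζ := by
        simpa using (hasDerivAt_id ζ).mul_const (d1 f sp w')
      exact ⟨(h1.sub h2).differentiableAt, (h1.sub h2).deriv⟩
    have key := Convex.norm_image_sub_le_of_norm_deriv_le (f := G) (C := M * ‖hh‖)
      (fun ζ hζ => (hGd ζ hζ).1)
      (fun ζ hζ => by
        rw [(hGd ζ hζ).2]
        calc ‖d1 f ζ w' - d1 f sp w'‖ ≤ M * ‖ζ - sp‖ := lip ζ (hsub hζ)
          _ ≤ M * ‖hh‖ := by gcongr; exact hseg_norm ζ hζ)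
      (convex_segment _ _) (left_mem_segment ℝ sp (sp+hh)) (right_mem_segment ℝ sp (sp+hh))
    have heq : G (sp + hh) - G sp = f (sp+hh) w' - f sp w' - hh * d1 f sp w' := by
      simp only [hG]; ring
    rw [heq] at key
    calc ‖f (sp+hh) w' - f sp w' - hh * d1 f sp w'‖ ≤ M * ‖hh‖ * ‖(sp + hh) - sp‖ := key
      _ = M * ‖hh‖^2 := by rw [add_sub_cancel_left]; ring

lemma pcont {f : ℂ → ℂ → ℂ} {C : ℝ} (h : HB f C) (hC : 0 < C) (sp sm : ℂ)
    (hsp : 0 < sp.re) (hsm : 0 < sm.re) :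
    Continuous (fun σ : ℝ => f (sp + (σ:ℂ) * Complex.I) (sm - (σ:ℂ) * Complex.I)) := by
  rw [continuous_iff_continuousAt]
  intro σ₀
  set z₀ := sp + (σ₀:ℂ) * Complex.I with hz₀def
  set w₀ := sm - (σ₀:ℂ) * Complex.I with hw₀def
  have hz₀ : 0 < z₀.re := by simp [hz₀def]; exact hsp
  have hw₀ : 0 < w₀.re := by simp [hw₀def]; exact hsm
  have hz₀re : z₀.re = sp.re := by simp [hz₀def]
  have hw₀re : w₀.re = sm.re := by simp [hw₀def]
  obtain ⟨M, hM, htay⟩ := tay1 h hC z₀ w₀ hz₀ hw₀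
  have hz₀n : 0 < ‖z₀‖ := lt_of_lt_of_le hz₀ (re_le_norm' z₀)
  set B := 8 * C / (z₀.re * ‖z₀‖^2 * (w₀.re/2)^2) with hB
  have hBbd : ∀ w' : ℂ, 0 < w'.re → w₀.re/2 ≤ w'.re → ‖d1 f z₀ w'‖ ≤ B := by
    intro w' hw1 hw2
    have h3 : w₀.re/2 ≤ ‖w'‖ := le_trans hw2 (re_le_norm' w')
    calc ‖d1 f z₀ w'‖ ≤ 8*C/(z₀.re*‖z₀‖^2*‖w'‖^2) := D1bd h hC z₀ w' hz₀ hw1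
      _ ≤ B := by rw [hB]; gcongr
  rw [ContinuousAt, ← tendsto_sub_nhds_zero_iff]
  have hev : ∀ᶠ σ in 𝓝 σ₀, |σ - σ₀| ≤ z₀.re/4 := by
    filter_upwards [Metric.ball_mem_nhds σ₀ (show (0:ℝ) < z₀.re/4 by positivity)] with σ hσ
    rw [Metric.mem_ball, Real.dist_eq] at hσ
    exact hσ.le
  refine squeeze_zero_norm'
    (a := fun σ => M * (σ - σ₀)^2 + B * |σ - σ₀| +
      ‖f z₀ (sm - (σ:ℂ) * Complex.I) - f z₀ w₀‖) ?_ ?_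
  · filter_upwards [hev] with σ hσ
    set hh : ℂ := ((σ - σ₀ : ℝ) : ℂ) * Complex.I with hhdef
    have hhnorm : ‖hh‖ = |σ - σ₀| := by
      rw [hhdef]
      simp only [norm_mul, Complex.norm_real, Complex.norm_I, mul_one, Real.norm_eq_abs]
    have hh4 : ‖hh‖ ≤ z₀.re/4 := by rw [hhnorm]; exact hσ
    set wσ : ℂ := sm - (σ:ℂ) * Complex.I with hwσdef
    have hwσ1 : 0 < wσ.re := by simp [hwσdef]; exact hsm
    have hwσ2 : w₀.re/2 ≤ wσ.re := by simp [hwσdef, hw₀re]; linarith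
    have hEq1 : sp + (σ:ℂ) * Complex.I = z₀ + hh := by
      rw [hz₀def, hhdef]; push_cast; ring
    have h1 := (htay hh wσ hh4 hwσ1 hwσ2).2
    have h2 : ‖hh * d1 f z₀ wσ‖ ≤ |σ - σ₀| * B := by
      rw [norm_mul, hhnorm]
      exact mul_le_mul_of_nonneg_left (hBbd wσ hwσ1 hwσ2) (abs_nonneg _)
    calc ‖f (sp + (σ:ℂ)*Complex.I) (sm - (σ:ℂ)*Complex.I) -
            f (sp + (σ₀:ℂ)*Complex.I) (sm - (σ₀:ℂ)*Complex.I)‖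
        = ‖(f (z₀+hh) wσ - f z₀ wσ - hh * d1 f z₀ wσ) + hh * d1 f z₀ wσ +
            (f z₀ wσ - f z₀ w₀)‖ := by
          rw [hEq1, ← hz₀def, ← hw₀def, ← hwσdef]; ring_nf
      _ ≤ ‖f (z₀+hh) wσ - f z₀ wσ - hh * d1 f z₀ wσ‖ + ‖hh * d1 f z₀ wσ‖ +
            ‖f z₀ wσ - f z₀ w₀‖ := norm_add₃_le
      _ ≤ M * ‖hh‖^2 + |σ - σ₀| * B + ‖f z₀ wσ - f z₀ w₀‖ := by
          gcongr
      _ = M * (σ - σ₀)^2 + B * |σ - σ₀| + ‖f z₀ wσ - f z₀ w₀‖ := by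
          rw [hhnorm, _root_.sq_abs]; ring
  · have c1 : Continuous (fun σ : ℝ => M * (σ - σ₀)^2 + B * |σ - σ₀|) :=
      (continuous_const.mul ((continuous_id.sub continuous_const).pow 2)).add
        (continuous_const.mul (continuous_id.sub continuous_const).abs)
    have l1 : Tendsto (fun σ : ℝ => M * (σ - σ₀)^2 + B * |σ - σ₀|) (𝓝 σ₀) (𝓝 0) := by
      have := c1.tendsto σ₀
      simpa using this
    have hcw : Continuous (fun σ : ℝ => sm - (σ:ℂ) * Complex.I) :=
      continuous_const.sub (Complex.continuous_ofReal.mul continuous_const)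
    have l2 : Tendsto (fun σ : ℝ => ‖f z₀ (sm - (σ:ℂ) * Complex.I) - f z₀ w₀‖)
        (𝓝 σ₀) (𝓝 0) := by
      have hf2 : ContinuousAt (fun w => f z₀ w) w₀ := (h.2.1 z₀ w₀ hz₀ hw₀).continuousAt
      have := (hf2.tendsto.comp (hcw.tendsto σ₀)).sub (tendsto_const_nhds (x := f z₀ w₀))
      simpa using this.norm
    simpa using l1.add l2

lemma d1cont {f : ℂ → ℂ → ℂ} {C : ℝ} (h : HB f C) (hC : 0 < C) (sp sm : ℂ)
    (hsp : 0 < sp.re) (hsm : 0 < sm.re) :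
    Tendsto (fun t : ℝ => d1 f sp (sm - (t:ℂ) * Complex.I)) (𝓝 0) (𝓝 (d1 f sp sm)) := by
  obtain ⟨M, hM, htay⟩ := tay1 h hC sp sm hsp hsm
  rw [Metric.tendsto_nhds]
  intro ε hε
  set δ : ℝ := min (sp.re/4) (ε/(4*(M+1))) with hδdef
  have hδpos : 0 < δ := lt_min (by positivity) (by positivity)
  have hδ1 : δ ≤ sp.re/4 := min_le_left _ _
  have hδ2 : δ ≤ ε/(4*(M+1)) := min_le_right _ _
  set hh : ℂ := (δ : ℂ) with hhdef
  have hhnorm : ‖hh‖ = δ := by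
    simp [hhdef, abs_of_pos hδpos]
  have hhne : hh ≠ 0 := by
    simp only [hhdef, ne_eq, Complex.ofReal_eq_zero]
    exact ne_of_gt hδpos
  have hh4 : ‖hh‖ ≤ sp.re/4 := by rw [hhnorm]; exact hδ1
  set Q : ℂ → ℂ := fun w' => (f (sp+hh) w' - f sp w') / hh with hQdef
  have key : ∀ w' : ℂ, 0 < w'.re → sm.re/2 ≤ w'.re →
      ‖d1 f sp w' - Q w'‖ ≤ M * δ := by
    intro w' hw1 hw2
    have h1 := (htay hh w' hh4 hw1 hw2).2
    have heq : d1 f sp w' - Q w'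
        = -((f (sp+hh) w' - f sp w' - hh * d1 f sp w') / hh) := by
      rw [hQdef]; field_simp; ring
    rw [heq, norm_neg, norm_div, hhnorm]
    calc ‖f (sp+hh) w' - f sp w' - hh * d1 f sp w'‖ / δ ≤ (M * ‖hh‖^2) / δ := by gcongr
      _ = M * δ := by rw [hhnorm]; field_simp
  have hsp' : 0 < (sp + hh).re := by
    simp only [hhdef, Complex.add_re, Complex.ofReal_re]
    linarith
  have hcw : Continuous (fun t : ℝ => sm - (t:ℂ) * Complex.I) :=
      continuous_const.sub (Complex.continuous_ofReal.mul continuous_const)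
  have hcw0 : Tendsto (fun t : ℝ => sm - (t:ℂ) * Complex.I) (𝓝 0) (𝓝 sm) := by
    have := hcw.tendsto 0
    simpa using this
  have hcont : Tendsto (fun t : ℝ =>
      ‖f (sp+hh) (sm - (t:ℂ)*Complex.I) - f (sp+hh) sm‖ +
      ‖f sp (sm - (t:ℂ)*Complex.I) - f sp sm‖) (𝓝 0) (𝓝 0) := by
    have hf1 : ContinuousAt (fun w => f (sp+hh) w) sm := (h.2.1 (sp+hh) sm hsp' hsm).continuousAt
    have hf2 : ContinuousAt (fun w => f sp w) sm := (h.2.1 sp sm hsp hsm).continuousAt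
    have t1 := ((hf1.tendsto.comp hcw0).sub (tendsto_const_nhds (x := f (sp+hh) sm))).norm
    have t2 := ((hf2.tendsto.comp hcw0).sub (tendsto_const_nhds (x := f sp sm))).norm
    simpa using t1.add t2
  have hev : ∀ᶠ t : ℝ in 𝓝 0,
      ‖f (sp+hh) (sm - (t:ℂ)*Complex.I) - f (sp+hh) sm‖ +
      ‖f sp (sm - (t:ℂ)*Complex.I) - f sp sm‖ < ε/2 * δ :=
    hcont.eventually_lt_const (by positivity)
  filter_upwards [hev] with t ht
  rw [dist_eq_norm]
  set wt : ℂ := sm - (t:ℂ) * Complex.I with hwtdef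
  have hwt1 : 0 < wt.re := by simp [hwtdef]; exact hsm
  have hwt2 : sm.re/2 ≤ wt.re := by simp [hwtdef]; linarith
  have k1 := key wt hwt1 hwt2
  have k3 := key sm hsm (by linarith)
  have k2 : ‖Q wt - Q sm‖ < ε/2 := by
    have heq : Q wt - Q sm = ((f (sp+hh) wt - f (sp+hh) sm) - (f sp wt - f sp sm)) / hh := by
      rw [hQdef]; field_simp; ring
    rw [heq, norm_div, hhnorm]
    have hle : ‖(f (sp+hh) wt - f (sp+hh) sm) - (f sp wt - f sp sm)‖
        ≤ ‖f (sp+hh) wt - f (sp+hh) sm‖ + ‖f sp wt - f sp sm‖ := norm_sub_le _ _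
    have : ‖(f (sp+hh) wt - f (sp+hh) sm) - (f sp wt - f sp sm)‖ < ε/2 * δ := by
      calc ‖(f (sp+hh) wt - f (sp+hh) sm) - (f sp wt - f sp sm)‖
          ≤ ‖f (sp+hh) wt - f (sp+hh) sm‖ + ‖f sp wt - f sp sm‖ := hle
        _ < ε/2 * δ := ht
    calc ‖(f (sp+hh) wt - f (sp+hh) sm) - (f sp wt - f sp sm)‖ / δ
        < (ε/2 * δ) / δ := (div_lt_div_iff_of_pos_right hδpos).mpr this
      _ = ε/2 := by field_simp
  have hMδ : M * δ ≤ ε/4 := by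
    have hx : M/(4*(M+1)) ≤ 1/4 := by
      rw [div_le_div_iff₀ (by positivity) (by norm_num)]
      nlinarith
    calc M * δ ≤ M * (ε/(4*(M+1))) := by gcongr
      _ = ε * (M/(4*(M+1))) := by ring
      _ ≤ ε * (1/4) := by
          have := hε.le
          gcongr
      _ = ε/4 := by ring
  have hsplit : d1 f sp wt - d1 f sp sm =
      (d1 f sp wt - Q wt) + (Q wt - Q sm) + (Q sm - d1 f sp sm) := by ring
  have k3' : ‖Q sm - d1 f sp sm‖ ≤ M*δ := by rw [norm_sub_rev]; exact k3
  calc ‖d1 f sp wt - d1 f sp sm‖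
      ≤ ‖d1 f sp wt - Q wt‖ + ‖Q wt - Q sm‖ + ‖Q sm - d1 f sp sm‖ := by
        rw [hsplit]; exact norm_add₃_le
    _ < M*δ + ε/2 + M*δ := by linarith
    _ ≤ ε := by linarith

lemma pderiv0 {f : ℂ → ℂ → ℂ} {C : ℝ} (h : HB f C) (hC : 0 < C) (sp sm : ℂ)
    (hsp : 0 < sp.re) (hsm : 0 < sm.re) :
    HasDerivAt (fun σ : ℝ => f (sp + (σ:ℂ) * Complex.I) (sm - (σ:ℂ) * Complex.I))
      (Complex.I * d1 f sp sm - Complex.I * d2 f sp sm) 0 := by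
  -- second-variable part
  have hpath : HasDerivAt (fun ζ : ℂ => sm - ζ * Complex.I) (-Complex.I) 0 := by
    simpa using ((hasDerivAt_id (0:ℂ)).mul_const Complex.I).const_sub sm
  have hpoint : sm - (0:ℂ) * Complex.I = sm := by ring
  have hf2 : HasDerivAt (fun w => f sp w) (d2 f sp sm) (sm - (0:ℂ) * Complex.I) := by
    rw [hpoint]; exact (h.2.1 sp sm hsp hsm).hasDerivAt
  have hcomp : HasDerivAt (fun ζ : ℂ => f sp (sm - ζ * Complex.I))
      (d2 f sp sm * -Complex.I) 0 := by
    have := hf2.comp (0:ℂ) hpath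
    exact this
  have hB : HasDerivAt (fun σ : ℝ => f sp (sm - (σ:ℂ) * Complex.I))
      (d2 f sp sm * -Complex.I) 0 := by
    have hc0 : HasDerivAt (fun ζ : ℂ => f sp (sm - ζ * Complex.I))
        (d2 f sp sm * -Complex.I) (((0:ℝ):ℂ)) := by simpa using hcomp
    simpa using hc0.comp_ofReal
  -- first-variable part
  obtain ⟨M, hM, htay⟩ := tay1 h hC sp sm hsp hsm
  set q : ℝ → ℂ := fun σ => f (sp + (σ:ℂ) * Complex.I) (sm - (σ:ℂ) * Complex.I)
      - f sp (sm - (σ:ℂ) * Complex.I) with hq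
  have hA : HasDerivAt q (Complex.I * d1 f sp sm) 0 := by
    rw [hasDerivAt_iff_tendsto_slope]
    have h1 : Tendsto (fun σ : ℝ => Complex.I * d1 f sp (sm - (σ:ℂ) * Complex.I))
        (𝓝[≠] 0) (𝓝 (Complex.I * d1 f sp sm)) :=
      (((d1cont h hC sp sm hsp hsm).const_mul Complex.I)).mono_left nhdsWithin_le_nhds
    have h2 : Tendsto (fun σ : ℝ => slope q 0 σ - Complex.I * d1 f sp (sm - (σ:ℂ) * Complex.I))
        (𝓝[≠] 0) (𝓝 0) := by
      refine squeeze_zero_norm' (a := fun σ : ℝ => M * |σ|) ?_ ?_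
      · have hev : ∀ᶠ σ : ℝ in 𝓝[≠] 0, |σ| ≤ sp.re/4 ∧ σ ≠ 0 := by
          refine Filter.Eventually.and ?_ self_mem_nhdsWithin
          refine eventually_nhdsWithin_of_eventually_nhds ?_
          filter_upwards [Metric.ball_mem_nhds (0:ℝ) (show (0:ℝ) < sp.re/4 by positivity)]
            with σ hσ
          rw [Metric.mem_ball, Real.dist_eq, sub_zero] at hσ
          exact hσ.le
        filter_upwards [hev] with σ ⟨hσ4, hσ0⟩
        set hh : ℂ := ((σ:ℝ):ℂ) * Complex.I with hhdef
        have hhnorm : ‖hh‖ = |σ| := by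
          simp only [hhdef, norm_mul, Complex.norm_real, Complex.norm_I, mul_one,
            Real.norm_eq_abs]
        set wσ : ℂ := sm - (σ:ℂ) * Complex.I with hwσ
        have hwσ1 : 0 < wσ.re := by simp [hwσ]; exact hsm
        have hwσ2 : sm.re/2 ≤ wσ.re := by simp [hwσ]; linarith
        have htt := (htay hh wσ (by rw [hhnorm]; exact hσ4) hwσ1 hwσ2).2
        have hq0 : q 0 = 0 := by simp [hq]
        have hslope : slope q 0 σ = (σ:ℝ)⁻¹ • q σ := by
          rw [slope_def_module, hq0, sub_zero, sub_zero]
        have hqσ : q σ = f (sp + hh) wσ - f sp wσ := by rw [hq, hhdef, hwσ]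
        rw [hslope, hqσ]
        have hexp : (σ:ℝ)⁻¹ • (f (sp + hh) wσ - f sp wσ) - Complex.I * d1 f sp wσ
            = (σ:ℝ)⁻¹ • (f (sp + hh) wσ - f sp wσ - hh * d1 f sp wσ) := by
          have hσC : ((σ:ℝ):ℂ) ≠ 0 := Complex.ofReal_ne_zero.mpr hσ0
          rw [hhdef, Complex.real_smul, Complex.real_smul, Complex.ofReal_inv]
          linear_combination (Complex.I * d1 f sp wσ) * inv_mul_cancel₀ hσC
        rw [hexp, norm_smul]
        simp only [norm_inv, Real.norm_eq_abs]
        calc |σ|⁻¹ * ‖f (sp + hh) wσ - f sp wσ - hh * d1 f sp wσ‖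
            ≤ |σ|⁻¹ * (M * ‖hh‖^2) := by
              gcongr
          _ = M * |σ| := by
              have habs : |σ| ≠ 0 := abs_ne_zero.mpr hσ0
              rw [hhnorm, pow_two,
                show |σ|⁻¹ * (M * (|σ| * |σ|)) = M * |σ| * (|σ|⁻¹ * |σ|) by ring,
                inv_mul_cancel₀ habs, mul_one]
      · have : Tendsto (fun σ : ℝ => M * |σ|) (𝓝 0) (𝓝 0) := by
          have : Continuous (fun σ : ℝ => M * |σ|) := continuous_const.mul _root_.continuous_abs
          have := this.tendsto (0:ℝ)
          simpa using this
        exact this.mono_left nhdsWithin_le_nhds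
      -- combine
    have := h1.add h2
    simp only [add_sub_cancel] at this
    simpa using this
  have hsum : HasDerivAt (fun σ : ℝ => f (sp + (σ:ℂ) * Complex.I) (sm - (σ:ℂ) * Complex.I))
      (Complex.I * d1 f sp sm + d2 f sp sm * -Complex.I) 0 := by
    have := hA.add hB
    exact this.congr_of_eventuallyEq (Filter.Eventually.of_forall fun σ => by simp [hq])
  convert hsum using 1
  ring

lemma pderiv {f : ℂ → ℂ → ℂ} {C : ℝ} (h : HB f C) (hC : 0 < C) (sp sm : ℂ)
    (hsp : 0 < sp.re) (hsm : 0 < sm.re) (σ₀ : ℝ) :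
    HasDerivAt (fun σ : ℝ => f (sp + (σ:ℂ) * Complex.I) (sm - (σ:ℂ) * Complex.I))
      (Complex.I * d1 f (sp + (σ₀:ℂ) * Complex.I) (sm - (σ₀:ℂ) * Complex.I)
        - Complex.I * d2 f (sp + (σ₀:ℂ) * Complex.I) (sm - (σ₀:ℂ) * Complex.I)) σ₀ := by
  set z₀ := sp + (σ₀:ℂ) * Complex.I with hz₀
  set w₀ := sm - (σ₀:ℂ) * Complex.I with hw₀
  have hz₀re : 0 < z₀.re := by simp [hz₀]; exact hsp
  have hw₀re : 0 < w₀.re := by simp [hw₀]; exact hsm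
  have h0 := pderiv0 h hC z₀ w₀ hz₀re hw₀re
  have hshift : HasDerivAt (fun σ : ℝ => σ - σ₀) (1:ℝ) σ₀ := by
    simpa using (hasDerivAt_id σ₀).sub_const σ₀
  have hcomp : HasDerivAt ((fun t : ℝ => f (z₀ + (t:ℂ) * Complex.I) (w₀ - (t:ℂ) * Complex.I))
      ∘ (fun σ : ℝ => σ - σ₀))
      ((1:ℝ) • (Complex.I * d1 f z₀ w₀ - Complex.I * d2 f z₀ w₀)) σ₀ :=
    HasDerivAt.scomp σ₀ (by simpa using h0) hshift
  have hfun : ((fun t : ℝ => f (z₀ + (t:ℂ) * Complex.I) (w₀ - (t:ℂ) * Complex.I))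
      ∘ (fun σ : ℝ => σ - σ₀)) = (fun σ : ℝ => f (sp + (σ:ℂ) * Complex.I) (sm - (σ:ℂ) * Complex.I)) := by
    funext σ
    simp only [Function.comp]
    have e1 : z₀ + ((σ - σ₀ : ℝ):ℂ) * Complex.I = sp + (σ:ℂ) * Complex.I := by
      rw [hz₀]; push_cast; ring
    have e2 : w₀ - ((σ - σ₀ : ℝ):ℂ) * Complex.I = sm - (σ:ℂ) * Complex.I := by
      rw [hw₀]; push_cast; ring
    rw [e1, e2]
  rw [hfun, one_smul] at hcomp
  exact hcomp

lemma ptail {f : ℂ → ℂ → ℂ} {C : ℝ} (h : HB f C) (hC : 0 < C) (sp sm : ℂ)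
    (hsp : 0 < sp.re) (hsm : 0 < sm.re) :
    Tendsto (fun σ : ℝ => f (sp + (σ:ℂ) * Complex.I) (sm - (σ:ℂ) * Complex.I))
      atTop (𝓝 0) := by
  refine squeeze_zero_norm' (a := fun σ : ℝ => (C / sm.re^2) * ((σ - ‖sp‖)^2)⁻¹) ?_ ?_
  · filter_upwards [Filter.eventually_ge_atTop (‖sp‖ + 1)] with σ hσ
    set z := sp + (σ:ℂ) * Complex.I with hz
    set w := sm - (σ:ℂ) * Complex.I with hw
    have hzre : 0 < z.re := by simp [hz]; exact hsp
    have hwre : 0 < w.re := by simp [hw]; exact hsm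
    have hwre' : w.re = sm.re := by simp [hw]
    have h1 : σ - ‖sp‖ ≤ ‖z‖ := norm_add_mul_I_ge sp σ
    have h2 : (1:ℝ) ≤ σ - ‖sp‖ := by linarith
    have h3 : sm.re ≤ ‖w‖ := by rw [← hwre']; exact re_le_norm' w
    calc ‖f z w‖ ≤ C / (‖z‖^2 * ‖w‖^2) := h.2.2 z w hzre hwre
      _ ≤ C / ((σ - ‖sp‖)^2 * sm.re^2) := by
          gcongr <;> nlinarith
      _ = (C / sm.re^2) * ((σ - ‖sp‖)^2)⁻¹ := by field_simp
  · have hbase : Tendsto (fun σ : ℝ => σ - ‖sp‖) atTop atTop := by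
      have := tendsto_atTop_add_const_right atTop (-‖sp‖) tendsto_id
      refine this.congr fun x => ?_
      simp only [id_eq]
      ring
    have h1 : Tendsto (fun σ : ℝ => (σ - ‖sp‖)^2) atTop atTop :=
      (tendsto_pow_atTop two_ne_zero).comp hbase
    have h2 : Tendsto (fun σ : ℝ => ((σ - ‖sp‖)^2)⁻¹) atTop (𝓝 0) := h1.inv_tendsto_atTop
    have := h2.const_mul (C / sm.re^2)
    simpa using this

lemma int_f {f : ℂ → ℂ → ℂ} {C : ℝ} (h : HB f C) (hC : 0 < C) (sp sm : ℂ)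
    (hsp : 0 < sp.re) (hsm : 0 < sm.re) :
    IntegrableOn (fun σ : ℝ => f (sp + (σ:ℂ) * Complex.I) (sm - (σ:ℂ) * Complex.I)) (Ioi 0) := by
  obtain ⟨m, hm, hSQ⟩ := sq_aux (a := sp.re) (K := ‖sp‖) hsp (norm_nonneg sp)
  refine Integrable.mono' (intBound (C/(m*sm.re^2)) ‖sp‖) ?_ ?_
  · exact (pcont h hC sp sm hsp hsm).aestronglyMeasurable.restrict
  · rw [ae_restrict_iff' measurableSet_Ioi]
    refine ae_of_all _ fun σ hσ => ?_
    set z : ℂ := sp + (σ:ℂ) * Complex.I with hz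
    set w : ℂ := sm - (σ:ℂ) * Complex.I with hw
    have hzre : z.re = sp.re := by simp [hz]
    have hwre : w.re = sm.re := by simp [hw]
    have hzre' : 0 < z.re := by rw [hzre]; exact hsp
    have hwre' : 0 < w.re := by rw [hwre]; exact hsm
    have hX1 : sp.re ≤ ‖z‖ := by rw [← hzre]; exact re_le_norm' z
    have hX2 : σ - ‖sp‖ ≤ ‖z‖ := norm_add_mul_I_ge sp σ
    have hsq := hSQ σ ‖z‖ (le_of_lt hσ) hX1 hX2
    have hw1 : sm.re ≤ ‖w‖ := by rw [← hwre]; exact re_le_norm' w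
    calc ‖f z w‖ ≤ C / (‖z‖^2 * ‖w‖^2) := h.2.2 z w hzre' hwre'
      _ ≤ C / ((m*(1+(σ-‖sp‖)^2)) * sm.re^2) := by
          gcongr
          all_goals simp
      _ = (C/(m*sm.re^2)) * (1+(σ-‖sp‖)^2)⁻¹ := by
          rw [← div_eq_mul_inv, div_div]
          ring_nf

lemma meas_d1 {f : ℂ → ℂ → ℂ} {C : ℝ} (h : HB f C) (hC : 0 < C) (sp sm : ℂ)
    (hsp : 0 < sp.re) (hsm : 0 < sm.re) :
    AEStronglyMeasurable (fun σ : ℝ => d1 f (sp + (σ:ℂ) * Complex.I) (sm - (σ:ℂ) * Complex.I))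
      (volume.restrict (Ioi 0)) := by
  refine aestronglyMeasurable_of_tendsto_ae atTop
    (f := fun (n:ℕ) (σ:ℝ) =>
      (f ((sp + ((1/(n+1):ℝ):ℂ)) + (σ:ℂ) * Complex.I) (sm - (σ:ℂ) * Complex.I)
        - f (sp + (σ:ℂ) * Complex.I) (sm - (σ:ℂ) * Complex.I)) / ((1/(n+1):ℝ):ℂ)) ?_ ?_
  · intro n
    have hre : 0 < (sp + ((1/(n+1):ℝ):ℂ)).re := by
      simp only [Complex.add_re, Complex.ofReal_re]
      positivity
    have hc1 := pcont h hC (sp + ((1/(n+1):ℝ):ℂ)) sm hre hsm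
    exact (((hc1.sub (pcont h hC sp sm hsp hsm)).div_const _)).aestronglyMeasurable.restrict
  · refine ae_of_all _ fun σ => ?_
    set z : ℂ := sp + (σ:ℂ) * Complex.I with hz
    have hzre : 0 < z.re := by simp [hz]; exact hsp
    have hwre : 0 < (sm - (σ:ℂ) * Complex.I).re := by simp; exact hsm
    have hd := (h.1 z (sm - (σ:ℂ) * Complex.I) hzre hwre).hasDerivAt
    rw [hasDerivAt_iff_tendsto_slope] at hd
    have hseq : Tendsto (fun n : ℕ => z + ((1/(n+1):ℝ):ℂ)) atTop (𝓝[≠] z) := by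
      rw [tendsto_nhdsWithin_iff]
      constructor
      · have h0 : Tendsto (fun n:ℕ => (1/(n+1):ℝ)) atTop (𝓝 0) :=
          tendsto_one_div_add_atTop_nhds_zero_nat
        have h1 := (Complex.continuous_ofReal.tendsto 0).comp h0
        have h2 := tendsto_const_nhds (x := z) (f := atTop (α := ℕ)) |>.add h1
        simpa using h2
      · refine Eventually.of_forall fun n => ?_
        have hne : ((1/(n+1):ℝ):ℂ) ≠ 0 := by
          simp only [ne_eq, Complex.ofReal_eq_zero]
          positivity
        simp only [mem_compl_iff, mem_singleton_iff]
        intro hcon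
        exact hne (add_eq_left.mp hcon)
    have := hd.comp hseq
    refine this.congr fun n => ?_
    have e : (z + ((1/(n+1):ℝ):ℂ)) - z = ((1/(n+1):ℝ):ℂ) := by ring
    have e2 : z + ((1/(n+1):ℝ):ℂ) = (sp + ((1/(n+1):ℝ):ℂ)) + (σ:ℂ) * Complex.I := by
      rw [hz]; ring
    simp only [Function.comp]
    rw [slope_def_field, e, e2]

lemma meas_d2 {f : ℂ → ℂ → ℂ} {C : ℝ} (h : HB f C) (hC : 0 < C) (sp sm : ℂ)
    (hsp : 0 < sp.re) (hsm : 0 < sm.re) :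
    AEStronglyMeasurable (fun σ : ℝ => d2 f (sp + (σ:ℂ) * Complex.I) (sm - (σ:ℂ) * Complex.I))
      (volume.restrict (Ioi 0)) := by
  refine aestronglyMeasurable_of_tendsto_ae atTop
    (f := fun (n:ℕ) (σ:ℝ) =>
      (f (sp + (σ:ℂ) * Complex.I) ((sm + ((1/(n+1):ℝ):ℂ)) - (σ:ℂ) * Complex.I)
        - f (sp + (σ:ℂ) * Complex.I) (sm - (σ:ℂ) * Complex.I)) / ((1/(n+1):ℝ):ℂ)) ?_ ?_
  · intro n
    have hre : 0 < (sm + ((1/(n+1):ℝ):ℂ)).re := by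
      simp only [Complex.add_re, Complex.ofReal_re]
      positivity
    have hc1 := pcont h hC sp (sm + ((1/(n+1):ℝ):ℂ)) hsp hre
    exact (((hc1.sub (pcont h hC sp sm hsp hsm)).div_const _)).aestronglyMeasurable.restrict
  · refine ae_of_all _ fun σ => ?_
    set w : ℂ := sm - (σ:ℂ) * Complex.I with hwd
    have hzre : 0 < (sp + (σ:ℂ) * Complex.I).re := by simp; exact hsp
    have hwre : 0 < w.re := by simp [hwd]; exact hsm
    have hd := (h.2.1 (sp + (σ:ℂ) * Complex.I) w hzre hwre).hasDerivAt
    rw [hasDerivAt_iff_tendsto_slope] at hd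
    have hseq : Tendsto (fun n : ℕ => w + ((1/(n+1):ℝ):ℂ)) atTop (𝓝[≠] w) := by
      rw [tendsto_nhdsWithin_iff]
      constructor
      · have h0 : Tendsto (fun n:ℕ => (1/(n+1):ℝ)) atTop (𝓝 0) :=
          tendsto_one_div_add_atTop_nhds_zero_nat
        have h1 := (Complex.continuous_ofReal.tendsto 0).comp h0
        have h2 := tendsto_const_nhds (x := w) (f := atTop (α := ℕ)) |>.add h1
        simpa using h2
      · refine Eventually.of_forall fun n => ?_
        have hne : ((1/(n+1):ℝ):ℂ) ≠ 0 := by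
          simp only [ne_eq, Complex.ofReal_eq_zero]
          positivity
        simp only [mem_compl_iff, mem_singleton_iff]
        intro hcon
        exact hne (add_eq_left.mp hcon)
    have := hd.comp hseq
    refine this.congr fun n => ?_
    have e : (w + ((1/(n+1):ℝ):ℂ)) - w = ((1/(n+1):ℝ):ℂ) := by ring
    have e2 : w + ((1/(n+1):ℝ):ℂ) = (sm + ((1/(n+1):ℝ):ℂ)) - (σ:ℂ) * Complex.I := by
      rw [hwd]; ring
    simp only [Function.comp]
    rw [slope_def_field, e, e2]

lemma hd1 {f : ℂ → ℂ → ℂ} {C : ℝ} (h : HB f C) (hC : 0 < C) (sp sm : ℂ)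
    (hsp : 0 < sp.re) (hsm : 0 < sm.re) :
    IntegrableOn (fun σ : ℝ => d1 f (sp + (σ:ℂ) * Complex.I) (sm - (σ:ℂ) * Complex.I)) (Ioi 0) ∧
    HasDerivAt (fun x : ℂ => ∫ σ in Ioi (0:ℝ), f (x + (σ:ℂ) * Complex.I) (sm - (σ:ℂ) * Complex.I))
      (∫ σ in Ioi (0:ℝ), d1 f (sp + (σ:ℂ) * Complex.I) (sm - (σ:ℂ) * Complex.I)) sp := by
  obtain ⟨m, hm, hSQ⟩ := sq_aux (a := sp.re/2) (K := ‖sp‖ + sp.re/2) (by positivity) (by positivity)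
  set K : ℝ := ‖sp‖ + sp.re/2 with hK
  have hopen : IsOpen {x : ℂ | 0 < x.re} := isOpen_Ioi.preimage Complex.continuous_re
  have key := hasDerivAt_integral_of_dominated_loc_of_deriv_le
    (μ := volume.restrict (Ioi (0:ℝ)))
    (F := fun (x : ℂ) (σ : ℝ) => f (x + (σ:ℂ) * Complex.I) (sm - (σ:ℂ) * Complex.I))
    (F' := fun (x : ℂ) (σ : ℝ) => d1 f (x + (σ:ℂ) * Complex.I) (sm - (σ:ℂ) * Complex.I))
    (x₀ := sp)
    (bound := fun σ => (8*C/((sp.re/2) * m * sm.re^2)) * (1+(σ - K)^2)⁻¹)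
    (Metric.ball_mem_nhds sp (show (0:ℝ) < sp.re/2 by positivity))
    ?_ ?_ ?_ ?_ ?_ ?_
  · exact ⟨key.1, key.2⟩
  · filter_upwards [hopen.mem_nhds hsp] with x hx
    exact (pcont h hC x sm hx hsm).aestronglyMeasurable.restrict
  · exact int_f h hC sp sm hsp hsm
  · exact meas_d1 h hC sp sm hsp hsm
  · rw [ae_restrict_iff' measurableSet_Ioi]
    refine ae_of_all _ fun σ hσ => ?_
    intro x hx
    have hx' : x ∈ Metric.closedBall sp (sp.re/2) := ball_subset_closedBall hx
    have hxre : sp.re/2 ≤ x.re := by have := re_ball hx'; linarith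
    set z : ℂ := x + (σ:ℂ) * Complex.I with hz
    set w : ℂ := sm - (σ:ℂ) * Complex.I with hw
    have hzre : z.re = x.re := by simp [hz]
    have hwre : w.re = sm.re := by simp [hw]
    have hzre' : 0 < z.re := by rw [hzre]; linarith
    have hwre' : 0 < w.re := by rw [hwre]; exact hsm
    have hX1 : sp.re/2 ≤ ‖z‖ := by
      have h1 := re_le_norm' z
      rw [hzre] at h1
      linarith
    have hX2 : σ - K ≤ ‖z‖ := by
      have h1 : σ - ‖x‖ ≤ ‖z‖ := norm_add_mul_I_ge x σ
      have h2 : ‖x‖ - ‖sp‖ ≤ ‖x - sp‖ := norm_sub_norm_le x sp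
      have h3 : ‖x - sp‖ ≤ sp.re/2 := by
        rw [← dist_eq_norm]; exact hx'
      rw [hK]; linarith
    have hsq := hSQ σ ‖z‖ (le_of_lt hσ) hX1 hX2
    have hw1 : sm.re ≤ ‖w‖ := by rw [← hwre]; exact re_le_norm' w
    calc ‖d1 f z w‖ ≤ 8 * C / (z.re * ‖z‖^2 * ‖w‖^2) := D1bd h hC z w hzre' hwre'
      _ ≤ 8 * C / ((sp.re/2) * (m*(1+(σ-K)^2)) * sm.re^2) := by
          gcongr
          rw [hzre]; exact hxre
      _ = (8*C/((sp.re/2) * m * sm.re^2)) * (1+(σ-K)^2)⁻¹ := by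
          rw [← div_eq_mul_inv, div_div]
          ring_nf
  · exact intBound _ _
  · rw [ae_restrict_iff' measurableSet_Ioi]
    refine ae_of_all _ fun σ hσ => ?_
    intro x hx
    have hx' : x ∈ Metric.closedBall sp (sp.re/2) := ball_subset_closedBall hx
    have hxre : sp.re/2 ≤ x.re := by have := re_ball hx'; linarith
    have hzre : 0 < (x + (σ:ℂ) * Complex.I).re := by simp; linarith
    have hwre : 0 < (sm - (σ:ℂ) * Complex.I).re := by simp; exact hsm
    have hfd := (h.1 (x + (σ:ℂ) * Complex.I) (sm - (σ:ℂ) * Complex.I) hzre hwre).hasDerivAt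
    have hinner : HasDerivAt (fun y : ℂ => y + (σ:ℂ) * Complex.I) 1 x :=
      (hasDerivAt_id x).add_const _
    have := hfd.comp x hinner
    rw [mul_one] at this
    exact this

lemma hd2 {f : ℂ → ℂ → ℂ} {C : ℝ} (h : HB f C) (hC : 0 < C) (sp sm : ℂ)
    (hsp : 0 < sp.re) (hsm : 0 < sm.re) :
    IntegrableOn (fun σ : ℝ => d2 f (sp + (σ:ℂ) * Complex.I) (sm - (σ:ℂ) * Complex.I)) (Ioi 0) ∧
    HasDerivAt (fun x : ℂ => ∫ σ in Ioi (0:ℝ), f (sp + (σ:ℂ) * Complex.I) (x - (σ:ℂ) * Complex.I))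
      (∫ σ in Ioi (0:ℝ), d2 f (sp + (σ:ℂ) * Complex.I) (sm - (σ:ℂ) * Complex.I)) sm := by
  obtain ⟨m, hm, hSQ⟩ := sq_aux (a := sp.re) (K := ‖sp‖) hsp (norm_nonneg sp)
  have hopen : IsOpen {x : ℂ | 0 < x.re} := isOpen_Ioi.preimage Complex.continuous_re
  have key := hasDerivAt_integral_of_dominated_loc_of_deriv_le
    (μ := volume.restrict (Ioi (0:ℝ)))
    (F := fun (x : ℂ) (σ : ℝ) => f (sp + (σ:ℂ) * Complex.I) (x - (σ:ℂ) * Complex.I))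
    (F' := fun (x : ℂ) (σ : ℝ) => d2 f (sp + (σ:ℂ) * Complex.I) (x - (σ:ℂ) * Complex.I))
    (x₀ := sm)
    (bound := fun σ => (8*C/(m * (sm.re/2) * (sm.re/2)^2)) * (1+(σ - ‖sp‖)^2)⁻¹)
    (Metric.ball_mem_nhds sm (show (0:ℝ) < sm.re/2 by positivity))
    ?_ ?_ ?_ ?_ ?_ ?_
  · exact ⟨key.1, key.2⟩
  · filter_upwards [hopen.mem_nhds hsm] with x hx
    exact (pcont h hC sp x hsp hx).aestronglyMeasurable.restrict
  · exact int_f h hC sp sm hsp hsm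
  · exact meas_d2 h hC sp sm hsp hsm
  · rw [ae_restrict_iff' measurableSet_Ioi]
    refine ae_of_all _ fun σ hσ => ?_
    intro x hx
    have hx' : x ∈ Metric.closedBall sm (sm.re/2) := ball_subset_closedBall hx
    have hxre : sm.re/2 ≤ x.re := by have := re_ball hx'; linarith
    set z : ℂ := sp + (σ:ℂ) * Complex.I with hz
    set w : ℂ := x - (σ:ℂ) * Complex.I with hw
    have hzre : z.re = sp.re := by simp [hz]
    have hwre : w.re = x.re := by simp [hw]
    have hzre' : 0 < z.re := by rw [hzre]; exact hsp
    have hwre' : 0 < w.re := by rw [hwre]; linarith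
    have hX1 : sp.re ≤ ‖z‖ := by rw [← hzre]; exact re_le_norm' z
    have hX2 : σ - ‖sp‖ ≤ ‖z‖ := norm_add_mul_I_ge sp σ
    have hsq := hSQ σ ‖z‖ (le_of_lt hσ) hX1 hX2
    have hw1 : sm.re/2 ≤ ‖w‖ := le_trans (by rw [hwre]; exact hxre) (re_le_norm' w)
    have hw2 : sm.re/2 ≤ w.re := by rw [hwre]; exact hxre
    calc ‖d2 f z w‖ ≤ 8 * C / (‖z‖^2 * w.re * ‖w‖^2) := D2bd h hC z w hzre' hwre'
      _ ≤ 8 * C / ((m*(1+(σ-‖sp‖)^2)) * (sm.re/2) * (sm.re/2)^2) := by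
          gcongr
      _ = (8*C/(m * (sm.re/2) * (sm.re/2)^2)) * (1+(σ-‖sp‖)^2)⁻¹ := by
          rw [← div_eq_mul_inv, div_div]
          ring_nf
  · exact intBound _ _
  · rw [ae_restrict_iff' measurableSet_Ioi]
    refine ae_of_all _ fun σ hσ => ?_
    intro x hx
    have hx' : x ∈ Metric.closedBall sm (sm.re/2) := ball_subset_closedBall hx
    have hxre : sm.re/2 ≤ x.re := by have := re_ball hx'; linarith
    have hzre : 0 < (sp + (σ:ℂ) * Complex.I).re := by simp; exact hsp
    have hwre : 0 < (x - (σ:ℂ) * Complex.I).re := by simp; linarith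
    have hfd := (h.2.1 (sp + (σ:ℂ) * Complex.I) (x - (σ:ℂ) * Complex.I) hzre hwre).hasDerivAt
    have hinner : HasDerivAt (fun y : ℂ => y - (σ:ℂ) * Complex.I) 1 x :=
      (hasDerivAt_id x).sub_const _
    have := hfd.comp x hinner
    rw [mul_one] at this
    exact this

end Stmt5Aux

open Stmt5Aux in
theorem stmt5 (f : ℂ → ℂ → ℂ) (C : ℝ) (hC : 0 < C)
    (hol1 : ∀ sp sm : ℂ, 0 < sp.re → 0 < sm.re →
      DifferentiableAt ℂ (fun z => f z sm) sp)
    (hol2 : ∀ sp sm : ℂ, 0 < sp.re → 0 < sm.re →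
      DifferentiableAt ℂ (fun z => f sp z) sm)
    (hbd : ∀ sp sm : ℂ, 0 < sp.re → 0 < sm.re →
      ‖f sp sm‖ ≤ C / (‖sp‖ ^ 2 * ‖sm‖ ^ 2)) :
    (∀ sp sm : ℂ, 0 < sp.re → 0 < sm.re →
      IntegrableOn
        (fun σ : ℝ => f (sp + (σ : ℂ) * Complex.I) (sm - (σ : ℂ) * Complex.I))
        (Set.Ioi 0)) ∧
    (∀ sp sm : ℂ, 0 < sp.re → 0 < sm.re →
      DifferentiableAt ℂ (fun z => gOff f z sm) sp ∧
      DifferentiableAt ℂ (fun z => gOff f sp z) sm) ∧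
    (∀ sp sm : ℂ, 0 < sp.re → 0 < sm.re →
      deriv (fun z => gOff f z sm) sp - deriv (fun z => gOff f sp z) sm = -f sp sm) := by
  have h : HB f C := ⟨hol1, hol2, hbd⟩
  have hD1 : ∀ sp sm : ℂ, 0 < sp.re → 0 < sm.re →
      HasDerivAt (fun z => gOff f z sm)
        (Complex.I * ∫ σ in Ioi (0:ℝ),
          d1 f (sp + (σ:ℂ) * Complex.I) (sm - (σ:ℂ) * Complex.I)) sp := by
    intro sp sm hsp hsm
    have := ((hd1 h hC sp sm hsp hsm).2).const_mul Complex.I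
    simpa [gOff] using this
  have hD2 : ∀ sp sm : ℂ, 0 < sp.re → 0 < sm.re →
      HasDerivAt (fun z => gOff f sp z)
        (Complex.I * ∫ σ in Ioi (0:ℝ),
          d2 f (sp + (σ:ℂ) * Complex.I) (sm - (σ:ℂ) * Complex.I)) sm := by
    intro sp sm hsp hsm
    have := ((hd2 h hC sp sm hsp hsm).2).const_mul Complex.I
    simpa [gOff] using this
  refine ⟨fun sp sm hsp hsm => int_f h hC sp sm hsp hsm,
    fun sp sm hsp hsm => ⟨(hD1 sp sm hsp hsm).differentiableAt,
      (hD2 sp sm hsp hsm).differentiableAt⟩, ?_⟩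
  intro sp sm hsp hsm
  have hder1 := (hD1 sp sm hsp hsm).deriv
  have hder2 := (hD2 sp sm hsp hsm).deriv
  rw [hder1, hder2]
  have hint1 := (hd1 h hC sp sm hsp hsm).1
  have hint2 := (hd2 h hC sp sm hsp hsm).1
  have hFTC := integral_Ioi_of_hasDerivAt_of_tendsto'
    (f := fun σ : ℝ => f (sp + (σ:ℂ) * Complex.I) (sm - (σ:ℂ) * Complex.I))
    (f' := fun σ : ℝ => Complex.I * d1 f (sp + (σ:ℂ) * Complex.I) (sm - (σ:ℂ) * Complex.I)
      - Complex.I * d2 f (sp + (σ:ℂ) * Complex.I) (sm - (σ:ℂ) * Complex.I))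
    (a := 0) (m := 0)
    (fun σ _ => pderiv h hC sp sm hsp hsm σ)
    ((hint1.const_mul Complex.I).sub (hint2.const_mul Complex.I))
    (ptail h hC sp sm hsp hsm)
  have hsplit : (∫ σ in Ioi (0:ℝ),
      (Complex.I * d1 f (sp + (σ:ℂ) * Complex.I) (sm - (σ:ℂ) * Complex.I)
        - Complex.I * d2 f (sp + (σ:ℂ) * Complex.I) (sm - (σ:ℂ) * Complex.I)))
      = Complex.I * (∫ σ in Ioi (0:ℝ), d1 f (sp + (σ:ℂ) * Complex.I) (sm - (σ:ℂ) * Complex.I))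
        - Complex.I * (∫ σ in Ioi (0:ℝ), d2 f (sp + (σ:ℂ) * Complex.I) (sm - (σ:ℂ) * Complex.I)) := by
    rw [integral_sub (hint1.const_mul Complex.I) (hint2.const_mul Complex.I),
      MeasureTheory.integral_const_mul, MeasureTheory.integral_const_mul]
  rw [← hsplit, hFTC]
  simp
end

section
/- Let w ∈ ℂ with w ≠ 0. Then, as x → 0 in ℂ with x ≠ 0, the function x ↦ (1/x²) · ( 1 + (w/(2x)) · Log((w − x)/(w + x)) ) tends to −1/(3 w²), where Log is the principal branch of the complex logarithm. -/
open Complex Filter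

private lemma key_bound (w x : ℂ) (hw : w ≠ 0) (hx : x ≠ 0) (hlt : ‖x‖ < ‖w‖ / 2) :
    ‖(1 / x ^ 2) * (1 + (w / (2 * x)) * Complex.log ((w - x) / (w + x)))
      - (-1 / (3 * w ^ 2))‖ ≤ 2 * ‖x‖ ^ 2 / ‖w‖ ^ 4 := by
  set u : ℂ := x / w with hu
  have hwpos : (0:ℝ) < ‖w‖ := norm_pos_iff.mpr hw
  have hunorm : ‖u‖ < 1/2 := by
    rw [hu, norm_div, div_lt_iff₀ hwpos]
    linarith
  have hu1 : ‖I * u‖ < 1 := by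
    rw [norm_mul, Complex.norm_I, one_mul]; linarith
  have hwx : w + x ≠ 0 := by
    intro h
    have : ‖x‖ = ‖w‖ := by
      have : x = -w := by linear_combination h
      rw [this, norm_neg]
    linarith
  -- power series for arctan
  have h1 := Complex.hasSum_arctan hu1
  have hterm : ∀ n : ℕ, (-1:ℂ) ^ n * (I * u) ^ (2 * n + 1) / ((2 * n + 1 : ℕ) : ℂ)
      = I * (u ^ (2 * n + 1) / ((2 * n + 1 : ℕ) : ℂ)) := by
    intro n
    have : (I * u) ^ (2 * n + 1) = (-1 : ℂ) ^ n * I * u ^ (2 * n + 1) := by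
      rw [mul_pow, pow_succ, pow_mul, I_sq]
    rw [this]
    have h2 : ((-1:ℂ) ^ n) * ((-1:ℂ) ^ n) = 1 := by
      rw [← mul_pow]; norm_num
    have h3 : (-1:ℂ)^n * ((-1:ℂ)^n * I * u ^ (2*n+1)) = I * u ^ (2*n+1) := by
      rw [show (-1:ℂ)^n * ((-1:ℂ)^n * I * u ^ (2*n+1))
          = ((-1:ℂ)^n * (-1:ℂ)^n) * (I * u ^ (2*n+1)) from by ring, h2, one_mul]
    rw [h3, mul_div_assoc]
  rw [show (fun n : ℕ => (-1:ℂ) ^ n * (I * u) ^ (2 * n + 1) / ((2 * n + 1 : ℕ) : ℂ))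
      = fun n : ℕ => I * (u ^ (2 * n + 1) / ((2 * n + 1 : ℕ) : ℂ)) from funext hterm] at h1
  have h3 : HasSum (fun n : ℕ => u ^ (2 * n + 1) / ((2 * n + 1 : ℕ) : ℂ))
      (-I * Complex.arctan (I * u)) := by
    have := h1.mul_left (-I)
    simpa [← mul_assoc, neg_mul, I_mul_I, neg_neg] using this
  -- log identity
  have hlog : Complex.log ((w - x) / (w + x)) = 2 * I * Complex.arctan (I * u) := by
    rw [Complex.arctan]
    have hq : (1 + (I * u) * I) / (1 - (I * u) * I) = (w - x) / (w + x) := by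
      have hIuI : (I * u) * I = -u := by
        rw [mul_comm I u, mul_assoc, I_mul_I, mul_neg_one]
      have h1 : 1 + (I * u) * I = (w - x) / w := by
        rw [hIuI, hu]; field_simp; ring
      have h2 : 1 - (I * u) * I = (w + x) / w := by
        rw [hIuI, hu]; field_simp; ring
      rw [h1, h2, div_div_div_cancel_right₀ hw]
    rw [hq]
    ring_nf
    rw [I_sq]
    ring
  -- main series
  set T : ℂ := -I * Complex.arctan (I * u) with hT
  set g : ℕ → ℂ := fun n => -(w / x ^ 3) * (u ^ (2 * n + 1) / ((2 * n + 1 : ℕ) : ℂ)) with hg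
  have h5 : HasSum g (-(w / x ^ 3) * T) := h3.mul_left _
  have hval : (1 / x ^ 2) * (1 + (w / (2 * x)) * Complex.log ((w - x) / (w + x)))
      = 1 / x ^ 2 + (-(w / x ^ 3)) * T := by
    rw [hlog, hT]
    field_simp
  have hg0 : g 0 = -(1 / x ^ 2) := by
    simp only [hg, hu]
    field_simp
    ring_nf
    field_simp
  have hg1 : g 1 = -1 / (3 * w ^ 2) := by
    simp only [hg, hu]
    norm_num
    field_simp
  have h6 : HasSum (fun n => g (n + 2))
      ((-(w / x ^ 3) * T) - ∑ i ∈ Finset.range 2, g i) := (hasSum_nat_add_iff' 2).mpr h5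
  have hsumr : ∑ i ∈ Finset.range 2, g i = g 0 + g 1 := by
    simp [Finset.sum_range_succ]
  have hdiff : (1 / x ^ 2) * (1 + (w / (2 * x)) * Complex.log ((w - x) / (w + x)))
      - (-1 / (3 * w ^ 2)) = (-(w / x ^ 3) * T) - ∑ i ∈ Finset.range 2, g i := by
    rw [hval, hsumr, hg0, hg1]; ring
  rw [hdiff, ← h6.tsum_eq]
  -- bound the tail by a geometric series
  set r : ℝ := ‖u‖ with hr
  have hr0 : 0 ≤ r := norm_nonneg u
  have hr2 : r ^ 2 < 1 := by nlinarith
  have hxw : ‖x‖ = r * ‖w‖ := by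
    rw [hr, hu, norm_div, div_mul_cancel₀ _ (norm_ne_zero_iff.mpr hw)]
  have hbound : ∀ n : ℕ, ‖g (n + 2)‖ ≤ (r ^ 2 / ‖w‖ ^ 2) * (r ^ 2) ^ n := by
    intro n
    have hxn : ‖x‖ ≠ 0 := norm_ne_zero_iff.mpr hx
    have hx3 : ‖x‖ ^ 3 = r ^ 3 * ‖w‖ ^ 3 := by rw [hxw]; ring
    have h1 : ‖g (n + 2)‖ = (‖w‖ / ‖x‖ ^ 3) * (r ^ (2 * (n + 2) + 1) / (2 * (n + 2) + 1 : ℕ)) := by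
      simp only [hg, norm_mul, norm_neg, norm_div, norm_pow, Complex.norm_natCast]
      rfl
    rw [h1, hx3]
    have hrpow : r ^ (2 * (n + 2) + 1) = r ^ 3 * (r ^ 2 * (r ^ 2) ^ n) := by
      rw [← pow_mul, ← pow_add, ← pow_add]
      ring_nf
    have h2 : (‖w‖ / (r ^ 3 * ‖w‖ ^ 3)) * (r ^ (2 * (n + 2) + 1) / (2 * (n + 2) + 1 : ℕ))
        ≤ (‖w‖ / (r ^ 3 * ‖w‖ ^ 3)) * r ^ (2 * (n + 2) + 1) := by
      apply mul_le_mul_of_nonneg_left _ (by positivity)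
      refine div_le_self (pow_nonneg hr0 _) ?_
      have : (1:ℕ) ≤ 2 * (n + 2) + 1 := by omega
      exact_mod_cast this
    refine h2.trans ?_
    rw [hrpow]
    rcases eq_or_lt_of_le hr0 with h | hrpos
    · simp [← h]
    · have hrne : r ≠ 0 := ne_of_gt hrpos
      have hwne : ‖w‖ ≠ 0 := norm_ne_zero_iff.mpr hw
      rw [show (‖w‖ / (r ^ 3 * ‖w‖ ^ 3)) * (r ^ 3 * (r ^ 2 * (r ^ 2) ^ n))
          = (r ^ 2 / ‖w‖ ^ 2) * (r ^ 2) ^ n by field_simp [hrne, hwne]]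
  have hsummaj : Summable (fun n : ℕ => (r ^ 2 / ‖w‖ ^ 2) * (r ^ 2) ^ n) :=
    (summable_geometric_of_lt_one (by positivity) hr2).mul_left _
  have hsumnorm : Summable (fun n : ℕ => ‖g (n + 2)‖) :=
    hsummaj.of_nonneg_of_le (fun n => norm_nonneg _) hbound
  calc ‖∑' n, g (n + 2)‖ ≤ ∑' n, ‖g (n + 2)‖ := norm_tsum_le_tsum_norm hsumnorm
    _ ≤ ∑' n : ℕ, (r ^ 2 / ‖w‖ ^ 2) * (r ^ 2) ^ n := Summable.tsum_le_tsum hbound hsumnorm hsummaj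
    _ = (r ^ 2 / ‖w‖ ^ 2) * (1 - r ^ 2)⁻¹ := by
        rw [tsum_mul_left, tsum_geometric_of_lt_one (by positivity) hr2]
    _ ≤ 2 * ‖x‖ ^ 2 / ‖w‖ ^ 4 := by
        rw [hxw]
        have h34 : (3:ℝ)/4 ≤ 1 - r ^ 2 := by nlinarith
        have hinv : (1 - r ^ 2)⁻¹ ≤ 2 := by
          rw [inv_le_comm₀ (by linarith) (by norm_num)]
          linarith
        have : (r ^ 2 / ‖w‖ ^ 2) * (1 - r ^ 2)⁻¹ ≤ (r ^ 2 / ‖w‖ ^ 2) * 2 :=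
          mul_le_mul_of_nonneg_left hinv (by positivity)
        refine this.trans (le_of_eq ?_)
        have hwne : ‖w‖ ≠ 0 := norm_ne_zero_iff.mpr hw
        field_simp [hwne]

theorem stmt13 (w : ℂ) (hw : w ≠ 0) :
    Filter.Tendsto
      (fun x : ℂ => (1 / x ^ 2) * (1 + (w / (2 * x)) * Complex.log ((w - x) / (w + x))))
      (nhdsWithin 0 {(0 : ℂ)}ᶜ) (nhds (-1 / (3 * w ^ 2))) := by
  have hwpos : (0:ℝ) < ‖w‖ := norm_pos_iff.mpr hw
  rw [← tendsto_sub_nhds_zero_iff]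
  apply squeeze_zero_norm' (a := fun x : ℂ => 2 * ‖x‖ ^ 2 / ‖w‖ ^ 4)
  · have h1 : ∀ᶠ x : ℂ in nhdsWithin 0 {(0:ℂ)}ᶜ, x ≠ 0 :=
      eventually_mem_nhdsWithin.mono (fun x hx => hx)
    have h2 : ∀ᶠ x : ℂ in nhdsWithin 0 {(0:ℂ)}ᶜ, ‖x‖ < ‖w‖ / 2 := by
      apply eventually_nhdsWithin_of_eventually_nhds
      have : Metric.ball (0:ℂ) (‖w‖/2) ∈ nhds (0:ℂ) := Metric.ball_mem_nhds _ (by positivity)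
      filter_upwards [this] with x hx
      simpa [Metric.mem_ball, dist_zero_right] using hx
    filter_upwards [h1, h2] with x hx hlt
    exact key_bound w x hw hx hlt
  · have hc : Continuous (fun x : ℂ => 2 * ‖x‖ ^ 2 / ‖w‖ ^ 4) := by
      continuity
    have := hc.tendsto (0:ℂ)
    simp only [norm_zero] at this
    norm_num at this
    exact tendsto_nhdsWithin_of_tendsto_nhds (by simpa using this)
end
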